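/- Let w be a Sturmian word over {0,1}, i.e., an infinite word with Comp_w(n) = n+1 for all n ≥ 1. Then for any two factors x, y of w of the same length, |h(x) − h(y)| ≤ 1, where h counts the number of occurrences of the letter 1. -/

import Mathlib

open Filter Topology

/-- The set of factors (contiguous subwords) of length `n` of the infinite word `w`. -/
def Factors (w : ℕ → Fin 2) (n : ℕ) : Set (Fin n → Fin 2) :=
  {v | ∃ i : ℕ, ∀ j : Fin n, v j = w (i + j)}

/-- The complexity function: number of distinct factors of length `n`. -/
noncomputable def Comp (w : ℕ → Fin 2) (n : ℕ) : ℕ := (Factors w n).ncard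

/-- The height of a finite word: the number of letters equal to `1`. -/
def hcount {n : ℕ} (v : Fin n → Fin 2) : ℕ := (Finset.univ.filter fun j => v j = 1).card

/-- Number of `1`'s among `w 0, …, w (n-1)` (height of the prefix of length `n`). -/
def pcount (w : ℕ → Fin 2) (n : ℕ) : ℕ := ((Finset.range n).filter fun i => w i = 1).card

namespace SB

abbrev Word := ℕ → Fin 2

/-- finite window of `w` starting at `i`, length `n`, as a list -/
def occ (w : Word) (i n : ℕ) : List (Fin 2) := (List.range n).map fun j => w (i + j)

/-- `l` is a factor of `w` -/
def Fac (w : Word) (l : List (Fin 2)) : Prop := ∃ i, occ w i l.length = l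

def ones (l : List (Fin 2)) : ℕ := l.count 1

@[simp] lemma occ_length (w : Word) (i n : ℕ) : (occ w i n).length = n := by simp [occ]

lemma occ_add (w : Word) (i a b : ℕ) :
    occ w i (a + b) = occ w i a ++ occ w (i + a) b := by
  simp only [occ, List.range_add, List.map_append, List.map_map]
  congr 1
  apply List.map_congr_left
  intro x _
  simp [Function.comp]; ring_nf

@[simp] lemma occ_zero (w : Word) (i : ℕ) : occ w i 0 = [] := by simp [occ]

lemma occ_one (w : Word) (i : ℕ) : occ w i 1 = [w i] := by
  simp [occ, List.range_succ]

lemma occ_succ (w : Word) (i n : ℕ) :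
    occ w i (n + 1) = occ w i n ++ [w (i + n)] := by
  rw [occ_add, occ_one]

lemma occ_two (w : Word) (i : ℕ) : occ w i 2 = [w i, w (i+1)] := by
  have := occ_succ w i 1
  rw [occ_one] at this
  simpa using this

lemma fac_occ (w : Word) (i n : ℕ) : Fac w (occ w i n) := ⟨i, by rw [occ_length]⟩

lemma fac_append_left {w : Word} {l₁ l₂ : List (Fin 2)} (h : Fac w (l₁ ++ l₂)) :
    Fac w l₁ := by
  obtain ⟨i, hi⟩ := h
  rw [List.length_append] at hi
  rw [occ_add] at hi
  exact ⟨i, (List.append_inj hi (by simp)).1⟩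

lemma fac_append_right {w : Word} {l₁ l₂ : List (Fin 2)} (h : Fac w (l₁ ++ l₂)) :
    Fac w l₂ := by
  obtain ⟨i, hi⟩ := h
  rw [List.length_append] at hi
  rw [occ_add] at hi
  exact ⟨i + l₁.length, (List.append_inj hi (by simp)).2⟩

lemma fac_infix {w : Word} {a b c : List (Fin 2)} (h : Fac w (a ++ b ++ c)) :
    Fac w b :=
  fac_append_right (fac_append_left h)

lemma fac_of_prefix {w : Word} {l L : List (Fin 2)} (h : Fac w L) (hp : l <+: L) :
    Fac w l := by
  obtain ⟨t, rfl⟩ := hp; exact fac_append_left h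

lemma fac_of_suffix {w : Word} {l L : List (Fin 2)} (h : Fac w L) (hp : l <:+ L) :
    Fac w l := by
  obtain ⟨t, rfl⟩ := hp; exact fac_append_right h

@[simp] lemma ones_nil : ones ([] : List (Fin 2)) = 0 := rfl

lemma ones_append (l₁ l₂ : List (Fin 2)) : ones (l₁ ++ l₂) = ones l₁ + ones l₂ := by
  simp [ones]

lemma ones_cons (a : Fin 2) (l : List (Fin 2)) :
    ones (a :: l) = (if a = 1 then 1 else 0) + ones l := by
  fin_cases a <;> simp [ones, List.count_cons] <;> omega

lemma ones_singleton (a : Fin 2) : ones [a] = if a = 1 then 1 else 0 := by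
  rw [show [a] = a :: [] from rfl, ones_cons]; simp

lemma ones_le_length (l : List (Fin 2)) : ones l ≤ l.length := List.count_le_length

lemma fin2_cases (a : Fin 2) : a = 0 ∨ a = 1 := by fin_cases a <;> simp

end SB

namespace SB

def wnd (w : Word) (i n : ℕ) : Fin n → Fin 2 := fun j => w (i + j)

lemma wnd_mem (w : Word) (i n : ℕ) : wnd w i n ∈ Factors w n := ⟨i, fun _ => rfl⟩

lemma mem_factors_iff {w : Word} {n : ℕ} {v : Fin n → Fin 2} :
    v ∈ Factors w n ↔ ∃ i, v = wnd w i n := by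
  constructor
  · rintro ⟨i, h⟩; exact ⟨i, funext h⟩
  · rintro ⟨i, rfl⟩; exact wnd_mem w i n

noncomputable def FS (w : Word) (n : ℕ) : Finset (Fin n → Fin 2) :=
  (Set.toFinite (Factors w n)).toFinset

lemma mem_FS {w : Word} {n : ℕ} {v : Fin n → Fin 2} : v ∈ FS w n ↔ v ∈ Factors w n :=
  Set.Finite.mem_toFinset _

lemma card_FS (w : Word) (n : ℕ) : (FS w n).card = Comp w n :=
  (Set.ncard_eq_toFinset_card _ _).symm

def init2 {n : ℕ} (v : Fin (n+1) → Fin 2) : Fin n → Fin 2 := fun j => v j.castSucc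

lemma init2_snoc {n : ℕ} (v : Fin n → Fin 2) (a : Fin 2) : init2 (Fin.snoc v a) = v := by
  funext j; simp [init2]

lemma snoc_init2_self {n : ℕ} (v : Fin (n+1) → Fin 2) :
    Fin.snoc (init2 v) (v (Fin.last n)) = v := Fin.snoc_init_self v

lemma init2_wnd (w : Word) (i n : ℕ) : init2 (wnd w i (n+1)) = wnd w i n := by
  funext j; simp [init2, wnd]

lemma wnd_succ (w : Word) (i n : ℕ) :
    wnd w i (n+1) = Fin.snoc (wnd w i n) (w (i+n)) := by
  funext j
  refine Fin.lastCases ?_ ?_ j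
  · simp [wnd]
  · intro k; simp [wnd]

lemma init2_mem {w : Word} {n : ℕ} {u : Fin (n+1) → Fin 2} (h : u ∈ Factors w (n+1)) :
    init2 u ∈ Factors w n := by
  rw [mem_factors_iff] at h ⊢
  obtain ⟨i, rfl⟩ := h
  exact ⟨i, (init2_wnd w i n).symm⟩

lemma exists_ext {w : Word} {n : ℕ} {v : Fin n → Fin 2} (h : v ∈ Factors w n) :
    ∃ u ∈ Factors w (n+1), init2 u = v := by
  rw [mem_factors_iff] at h
  obtain ⟨i, rfl⟩ := h
  exact ⟨wnd w i (n+1), wnd_mem w i (n+1), init2_wnd w i n⟩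

/-- right-special factor (function form) -/
def RSf (w : Word) {n : ℕ} (v : Fin n → Fin 2) : Prop :=
  Fin.snoc v 0 ∈ Factors w (n+1) ∧ Fin.snoc v 1 ∈ Factors w (n+1)

lemma comp_mono (w : Word) (n : ℕ) : Comp w n ≤ Comp w (n+1) := by
  rw [← card_FS, ← card_FS]
  apply Finset.card_le_card_of_surjOn init2
  intro v hv
  obtain ⟨u, hu, h⟩ := exists_ext (mem_FS.1 hv)
  exact ⟨u, mem_FS.2 hu, h⟩

section counting
variable (w : Word) (n : ℕ)

noncomputable def fib (v : Fin n → Fin 2) : Finset (Fin (n+1) → Fin 2) :=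
  (FS w (n+1)).filter (fun u => init2 u = v)

lemma card_sum : Comp w (n+1) = ∑ v ∈ FS w n, (fib w n v).card := by
  rw [← card_FS]
  apply Finset.card_eq_sum_card_fiberwise
  intro u hu
  exact mem_FS.2 (init2_mem (mem_FS.1 hu))

lemma fib_subset (v : Fin n → Fin 2) :
    fib w n v ⊆ ({Fin.snoc v 0, Fin.snoc v 1} : Finset (Fin (n+1) → Fin 2)) := by
  intro u hu
  rw [fib, Finset.mem_filter] at hu
  obtain ⟨_, hi⟩ := hu
  have h2 : u = Fin.snoc v (u (Fin.last n)) := by rw [← hi]; exact (snoc_init2_self u).symm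
  rcases fin2_cases (u (Fin.last n)) with h | h <;> rw [h] at h2 <;> simp [h2]

lemma fib_card_le (v : Fin n → Fin 2) : (fib w n v).card ≤ 2 := by
  calc (fib w n v).card ≤ ({Fin.snoc v 0, Fin.snoc v 1} : Finset (Fin (n+1) → Fin 2)).card :=
        Finset.card_le_card (fib_subset w n v)
    _ ≤ 2 := (Finset.card_insert_le _ _).trans (by simp)

lemma RSf_of_two {v : Fin n → Fin 2} (h : 2 ≤ (fib w n v).card) : RSf w v := by
  have hs := fib_subset w n v
  have hpair : ({Fin.snoc v 0, Fin.snoc v 1} : Finset (Fin (n+1) → Fin 2)).card ≤ (fib w n v).card := by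
    calc ({Fin.snoc v 0, Fin.snoc v 1} : Finset (Fin (n+1) → Fin 2)).card ≤ 2 :=
          (Finset.card_insert_le _ _).trans (by simp)
      _ ≤ _ := h
  have heq := Finset.eq_of_subset_of_card_le hs hpair
  constructor
  · have h0 : Fin.snoc v 0 ∈ fib w n v := heq ▸ (by simp)
    exact mem_FS.1 ((Finset.mem_filter.1 h0).1)
  · have h1 : Fin.snoc v 1 ∈ fib w n v := heq ▸ (by simp)
    exact mem_FS.1 ((Finset.mem_filter.1 h1).1)

lemma two_le_fib_card {v : Fin n → Fin 2} (h : RSf w v) : 2 ≤ (fib w n v).card := by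
  have h0 : Fin.snoc v 0 ∈ fib w n v := by
    rw [fib, Finset.mem_filter]; exact ⟨mem_FS.2 h.1, init2_snoc _ _⟩
  have h1 : Fin.snoc v 1 ∈ fib w n v := by
    rw [fib, Finset.mem_filter]; exact ⟨mem_FS.2 h.2, init2_snoc _ _⟩
  have hne : (Fin.snoc v 0 : Fin (n+1) → Fin 2) ≠ Fin.snoc v 1 := by
    intro he
    have := congrFun he (Fin.last n)
    simp at this
  exact Finset.one_lt_card.2 ⟨_, h0, _, h1, hne⟩

lemma fib_pos {v : Fin n → Fin 2} (h : v ∈ FS w n) : 1 ≤ (fib w n v).card := by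
  obtain ⟨u, hu, hi⟩ := exists_ext (mem_FS.1 h)
  exact Finset.card_pos.2 ⟨u, Finset.mem_filter.2 ⟨mem_FS.2 hu, hi⟩⟩

/-- at most one right-special factor implies small complexity growth -/
lemma comp_succ_le (hu : ∀ v₁ v₂ : Fin n → Fin 2, RSf w v₁ → RSf w v₂ → v₁ = v₂) :
    Comp w (n+1) ≤ Comp w n + 1 := by
  rw [card_sum, ← card_FS]
  by_cases hRS : ∃ v₀ ∈ FS w n, RSf w v₀
  · obtain ⟨v₀, hv₀, hv₀RS⟩ := hRS
    have key : ∀ v ∈ (FS w n).erase v₀, (fib w n v).card ≤ 1 := by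
      intro v hv
      by_contra hc
      push_neg at hc
      have := RSf_of_two w n (by omega : 2 ≤ (fib w n v).card)
      exact (Finset.mem_erase.1 hv).1 (hu v v₀ this hv₀RS)
    have hcard : 1 ≤ (FS w n).card := Finset.card_pos.2 ⟨v₀, hv₀⟩
    calc ∑ v ∈ FS w n, (fib w n v).card
        = (fib w n v₀).card + ∑ v ∈ (FS w n).erase v₀, (fib w n v).card :=
          (Finset.add_sum_erase _ _ hv₀).symm
      _ ≤ 2 + ((FS w n).erase v₀).card • 1 :=
          Nat.add_le_add (fib_card_le w n v₀) (Finset.sum_le_card_nsmul _ _ 1 key)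
      _ ≤ (FS w n).card + 1 := by
          rw [Finset.card_erase_of_mem hv₀]
          simp only [smul_eq_mul, mul_one]
          omega
  · push_neg at hRS
    calc ∑ v ∈ FS w n, (fib w n v).card ≤ (FS w n).card • 1 := by
          apply Finset.sum_le_card_nsmul
          intro v hv
          by_contra hc
          push_neg at hc
          exact hRS v hv (RSf_of_two w n (by omega))
      _ ≤ (FS w n).card + 1 := by simp

/-- plateau implies deterministic right extensions -/
lemma unique_ext_of_plateau (h : Comp w (n+1) ≤ Comp w n)
    {v : Fin n → Fin 2} {a b : Fin 2}
    (ha : Fin.snoc v a ∈ Factors w (n+1)) (hb : Fin.snoc v b ∈ Factors w (n+1)) :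
    a = b := by
  by_contra hab
  have hRS : RSf w v := by
    rcases fin2_cases a with h0 | h0 <;> rcases fin2_cases b with h1 | h1 <;>
      subst h0 <;> subst h1 <;> first | exact absurd rfl hab | exact ⟨ha, hb⟩ | exact ⟨hb, ha⟩
  have hv : v ∈ FS w n := by
    rw [mem_FS]
    have h3 : init2 (Fin.snoc v a) ∈ Factors w n := init2_mem ha
    rwa [init2_snoc] at h3
  have hbig : (FS w n).card + 1 ≤ ∑ x ∈ FS w n, (fib w n x).card := by
    have hcard : 1 ≤ (FS w n).card := Finset.card_pos.2 ⟨v, hv⟩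
    calc (FS w n).card + 1 = 2 + ((FS w n).erase v).card := by
          rw [Finset.card_erase_of_mem hv]; omega
      _ ≤ (fib w n v).card + ∑ x ∈ (FS w n).erase v, (fib w n x).card := by
          apply Nat.add_le_add (two_le_fib_card w n hRS)
          calc ((FS w n).erase v).card = ((FS w n).erase v).card • 1 := by simp
            _ ≤ _ := Finset.card_nsmul_le_sum _ _ _
                (fun x hx => fib_pos w n (Finset.mem_of_mem_erase hx))
      _ = ∑ x ∈ FS w n, (fib w n x).card :=
          Finset.add_sum_erase (FS w n) (fun x => (fib w n x).card) hv
  rw [← card_sum] at hbig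
  have hc := card_FS w n
  omega

/-- a Sturmian word has at most one right special factor of each length -/
lemma sturmian_unique_RSf (hst : ∀ m, 1 ≤ m → Comp w m = m + 1)
    {v₁ v₂ : Fin n → Fin 2} (h₁ : RSf w v₁) (h₂ : RSf w v₂) : v₁ = v₂ := by
  rcases Nat.eq_zero_or_pos n with rfl | hn
  · exact Subsingleton.elim _ _
  by_contra hne
  have hv₁ : v₁ ∈ FS w n := by
    rw [mem_FS]; have h3 := init2_mem h₁.1; rwa [init2_snoc] at h3
  have hv₂ : v₂ ∈ FS w n := by
    rw [mem_FS]; have h3 := init2_mem h₂.1; rwa [init2_snoc] at h3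
  have hv₂' : v₂ ∈ (FS w n).erase v₁ := Finset.mem_erase.2 ⟨Ne.symm hne, hv₂⟩
  have h2card : 1 < (FS w n).card := Finset.one_lt_card.2 ⟨v₁, hv₁, v₂, hv₂, hne⟩
  have hbig : (FS w n).card + 2 ≤ ∑ x ∈ FS w n, (fib w n x).card := by
    calc (FS w n).card + 2 = 2 + (2 + (((FS w n).erase v₁).erase v₂).card) := by
          rw [Finset.card_erase_of_mem hv₂', Finset.card_erase_of_mem hv₁]; omega
      _ ≤ (fib w n v₁).card + ((fib w n v₂).card + ∑ x ∈ ((FS w n).erase v₁).erase v₂, (fib w n x).card) := by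
          apply Nat.add_le_add (two_le_fib_card w n h₁)
          apply Nat.add_le_add (two_le_fib_card w n h₂)
          calc (((FS w n).erase v₁).erase v₂).card = (((FS w n).erase v₁).erase v₂).card • 1 := by simp
            _ ≤ _ := Finset.card_nsmul_le_sum _ _ _
                (fun x hx => fib_pos w n (Finset.mem_of_mem_erase (Finset.mem_of_mem_erase hx)))
      _ = (fib w n v₁).card + ∑ x ∈ (FS w n).erase v₁, (fib w n x).card := by
          rw [Finset.add_sum_erase ((FS w n).erase v₁) (fun x => (fib w n x).card) hv₂']
      _ = ∑ x ∈ FS w n, (fib w n x).card :=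
          Finset.add_sum_erase (FS w n) (fun x => (fib w n x).card) hv₁
  rw [← card_sum] at hbig
  have hc1 : (FS w n).card = n + 1 := by rw [card_FS]; exact hst n hn
  have hc2 : Comp w (n+1) = n + 2 := hst (n+1) (by omega)
  omega

end counting
end SB

namespace SB

def EvPer (w : Word) : Prop := ∃ p, 0 < p ∧ ∃ Q, ∀ i, Q ≤ i → w (i + p) = w i

lemma det_of_plateau {w : Word} {n : ℕ} (h : Comp w (n+1) ≤ Comp w n) :
    ∀ i j, wnd w i n = wnd w j n → w (i + n) = w (j + n) := by
  intro i j hij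
  have hi : Fin.snoc (wnd w i n) (w (i+n)) ∈ Factors w (n+1) := by
    rw [← wnd_succ]; exact wnd_mem w i (n+1)
  have hj : Fin.snoc (wnd w j n) (w (j+n)) ∈ Factors w (n+1) := by
    rw [← wnd_succ]; exact wnd_mem w j (n+1)
  rw [hij] at hi
  exact unique_ext_of_plateau w n h hi hj


lemma evper_of_window_eq {w : Word} {n i j : ℕ} (hn : 1 ≤ n)
    (h : Comp w (n+1) ≤ Comp w n) (hlt : i < j) (hij : wnd w i n = wnd w j n) :
    EvPer w := by
  have H : ∀ t d, d < n → w (i + t + d) = w (j + t + d) := by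
    intro t
    induction t with
    | zero =>
      intro d hd
      have := congrFun hij ⟨d, hd⟩
      simpa [wnd] using this
    | succ t ih =>
      intro d hd
      have hw : wnd w (i + t) n = wnd w (j + t) n := by
        funext k
        have := ih k.1 k.2
        simpa [wnd] using this
      have hdet := det_of_plateau h (i + t) (j + t) hw
      rcases Nat.lt_or_ge (d + 1) n with hd1 | hd1
      · have := ih (d + 1) hd1
        rw [show i + (t+1) + d = i + t + (d+1) by omega,
            show j + (t+1) + d = j + t + (d+1) by omega]
        exact this
      · have hdn : d + 1 = n := by omega
        rw [show i + (t+1) + d = i + t + n by omega,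
            show j + (t+1) + d = j + t + n by omega]
        exact hdet
  refine ⟨j - i, by omega, i, fun x hx => ?_⟩
  have h0 := H (x - i) 0 (by omega)
  rw [show i + (x - i) + 0 = x by omega, show j + (x - i) + 0 = x + (j - i) by omega] at h0
  exact h0.symm

lemma evper_of_plateau {w : Word} {n : ℕ} (hn : 1 ≤ n) (h : Comp w (n+1) ≤ Comp w n) :
    EvPer w := by
  obtain ⟨i, j, hne, hij⟩ :=
    Finite.exists_ne_map_eq_of_infinite (fun i : ℕ => wnd w i n)
  rcases Ne.lt_or_gt hne with hlt | hlt
  · exact evper_of_window_eq hn h hlt hij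
  · exact evper_of_window_eq hn h hlt hij.symm

lemma comp_one_small {w : Word} (h : Comp w 1 ≤ 1) : EvPer w := by
  have key : ∀ i, w i = w 0 := by
    intro i
    have h1 : wnd w i 1 ∈ Factors w 1 := wnd_mem w i 1
    have h2 : wnd w 0 1 ∈ Factors w 1 := wnd_mem w 0 1
    have heq : wnd w i 1 = wnd w 0 1 := by
      have := (Set.ncard_le_one (Set.toFinite _)).1 h
      exact this _ h1 _ h2
    have := congrFun heq ⟨0, by omega⟩
    simpa [wnd] using this
  exact ⟨1, by omega, 0, fun i _ => by rw [key (i+1), key i]⟩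

lemma not_evper_comp {w : Word} (hne : ¬ EvPer w) : ∀ n, 1 ≤ n → n + 1 ≤ Comp w n := by
  intro n
  induction n with
  | zero => omega
  | succ n ih =>
    intro _
    rcases Nat.eq_zero_or_pos n with rfl | hn
    · by_contra hc
      push_neg at hc
      simp only [Nat.zero_add] at hc
      exact hne (comp_one_small (by omega))
    · have h1 := ih hn
      by_contra hc
      push_neg at hc
      have h2 := comp_mono w n
      have hpl : Comp w (n+1) ≤ Comp w n := by omega
      exact hne (evper_of_plateau hn hpl)

lemma comp_le_of_evper {w : Word} (h : EvPer w) : ∃ C, ∀ n, Comp w n ≤ C := by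
  obtain ⟨p, hp, Q, hper⟩ := h
  refine ⟨Q + p, fun n => ?_⟩
  have key : ∀ i, ∃ i' < Q + p, wnd w i' n = wnd w i n := by
    intro i
    induction i using Nat.strong_induction_on with
    | _ i ih =>
      by_cases hi : i < Q + p
      · exact ⟨i, hi, rfl⟩
      · push_neg at hi
        have hstep : wnd w (i - p) n = wnd w i n := by
          funext k
          have h1 : Q ≤ i - p + k := by omega
          have := hper (i - p + k) h1
          rw [show i - p + k + p = i + k by omega] at this
          exact this.symm
        obtain ⟨i', hi', he⟩ := ih (i - p) (by omega)
        exact ⟨i', hi', he.trans hstep⟩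
  have hsub : Factors w n ⊆ (fun i' => wnd w i' n) '' ↑(Finset.range (Q + p)) := by
    intro v hv
    rw [mem_factors_iff] at hv
    obtain ⟨i, rfl⟩ := hv
    obtain ⟨i', hi', he⟩ := key i
    exact ⟨i', by simpa using hi', he⟩
  calc Comp w n ≤ ((fun i' => wnd w i' n) '' ↑(Finset.range (Q + p))).ncard :=
        Set.ncard_le_ncard hsub (Set.toFinite _)
    _ ≤ (↑(Finset.range (Q + p)) : Set ℕ).ncard := Set.ncard_image_le (Set.toFinite _)
    _ = Q + p := by rw [Set.ncard_coe_finset, Finset.card_range]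

lemma sturmian_not_evper {w : Word} (hst : ∀ n, 1 ≤ n → Comp w n = n + 1) :
    ¬ EvPer w := by
  intro h
  obtain ⟨C, hC⟩ := comp_le_of_evper h
  have h1 := hC (C + 1)
  rw [hst (C+1) (by omega)] at h1
  omega

def shf (w : Word) : Word := fun i => w (i + 1)

lemma factors_shf_subset (w : Word) (n : ℕ) : Factors (shf w) n ⊆ Factors w n := by
  rintro v ⟨i, h⟩
  refine ⟨i + 1, fun j => ?_⟩
  rw [h j]
  simp only [shf]
  congr 1
  omega

lemma evper_of_shf {w : Word} (h : EvPer (shf w)) : EvPer w := by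
  obtain ⟨p, hp, Q, hper⟩ := h
  refine ⟨p, hp, Q + 1, fun i hi => ?_⟩
  have := hper (i - 1) (by omega)
  simp only [shf] at this
  rw [show i + p = i - 1 + p + 1 by omega, this, show i - 1 + 1 = i by omega]

lemma hst_shf {w : Word} (hst : ∀ n, 1 ≤ n → Comp w n = n + 1) :
    ∀ n, 1 ≤ n → Comp (shf w) n = n + 1 := by
  intro n hn
  have hub : Comp (shf w) n ≤ n + 1 := by
    rw [← hst n hn]
    exact Set.ncard_le_ncard (factors_shf_subset w n) (Set.toFinite _)
  have hlb : n + 1 ≤ Comp (shf w) n := by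
    apply not_evper_comp _ n hn
    intro h
    exact sturmian_not_evper hst (evper_of_shf h)
  omega

lemma factors_shf_eq {w : Word} (hst : ∀ n, 1 ≤ n → Comp w n = n + 1) (n : ℕ) :
    Factors (shf w) n = Factors w n := by
  rcases Nat.eq_zero_or_pos n with rfl | hn
  · ext v
    constructor
    · intro _; exact ⟨0, fun j => j.elim0⟩
    · intro _; exact ⟨0, fun j => j.elim0⟩
  · apply Set.eq_of_subset_of_ncard_le (factors_shf_subset w n)
    rw [show (Factors (shf w) n).ncard = Comp (shf w) n from rfl,
        show (Factors w n).ncard = Comp w n from rfl, hst n hn, hst_shf hst n hn]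

end SB

namespace SB

lemma occ_getElem {w : Word} {i n j : ℕ} (hj : j < n) :
    (occ w i n)[j]'(by simp [occ]; omega) = w (i + j) := by
  simp [occ]

lemma occ_eq_iff {w : Word} {i n : ℕ} {l : List (Fin 2)} (hl : l.length = n) :
    occ w i n = l ↔ ∀ (j : ℕ) (h : j < n), l[j]'(by omega) = w (i + j) := by
  constructor
  · intro h j hj
    simp only [← h]
    exact occ_getElem hj
  · intro h
    apply List.ext_getElem (by simp [occ, hl])
    intro j h1 h2
    rw [occ_getElem (by simpa [occ] using h1)]
    exact (h j (by simpa [occ] using h1)).symm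

lemma fac_iff_mem' {w : Word} {l : List (Fin 2)} {n : ℕ} (hl : l.length = n) :
    Fac w l ↔ (fun j : Fin n => l[j.val]'(by omega)) ∈ Factors w n := by
  constructor
  · rintro ⟨i, h⟩
    rw [hl] at h
    refine ⟨i, fun j => ?_⟩
    exact ((occ_eq_iff hl).1 h j j.isLt)
  · rintro ⟨i, h⟩
    refine ⟨i, ?_⟩
    rw [hl]
    exact (occ_eq_iff hl).2 (fun j hj => h ⟨j, hj⟩)

lemma occ_shf (w : Word) (i n : ℕ) : occ (shf w) i n = occ w (i+1) n := by
  simp only [occ]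
  apply List.map_congr_left
  intro j _
  simp only [shf]
  congr 1
  omega

lemma fac_shf_iff {w : Word} (hst : ∀ n, 1 ≤ n → Comp w n = n + 1) {l : List (Fin 2)} :
    Fac (shf w) l ↔ Fac w l := by
  rw [fac_iff_mem' (rfl : l.length = l.length), fac_iff_mem' (rfl : l.length = l.length),
      factors_shf_eq hst]

lemma fac_exists_pos_occ {w : Word} (hst : ∀ n, 1 ≤ n → Comp w n = n + 1)
    {l : List (Fin 2)} (h : Fac w l) : ∃ i, 1 ≤ i ∧ occ w i l.length = l := by
  have h2 : Fac (shf w) l := (fac_shf_iff hst).2 h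
  obtain ⟨i, hi⟩ := h2
  rw [occ_shf] at hi
  exact ⟨i + 1, by omega, hi⟩

lemma fac_pair_iff {w : Word} {a b : Fin 2} :
    Fac w [a, b] ↔ ∃ i, w i = a ∧ w (i+1) = b := by
  constructor
  · rintro ⟨i, hi⟩
    rw [show ([a,b] : List (Fin 2)).length = 2 from rfl, occ_two] at hi
    simp at hi
    exact ⟨i, hi.1, hi.2⟩
  · rintro ⟨i, h1, h2⟩
    refine ⟨i, ?_⟩
    rw [show ([a,b] : List (Fin 2)).length = 2 from rfl, occ_two, h1, h2]

lemma exists_letter {w : Word} (hst : ∀ n, 1 ≤ n → Comp w n = n + 1) (a : Fin 2) :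
    ∃ i, w i = a := by
  have huniv : Factors w 1 = Set.univ := by
    apply Set.eq_of_subset_of_ncard_le (Set.subset_univ _)
    rw [Set.ncard_univ]
    have : Nat.card (Fin 1 → Fin 2) = 2 := by
      simp [Nat.card_eq_fintype_card]
    rw [this, show (Factors w 1).ncard = Comp w 1 from rfl, hst 1 (by omega)]
  have : (fun _ : Fin 1 => a) ∈ Factors w 1 := by rw [huniv]; trivial
  obtain ⟨i, hi⟩ := this
  exact ⟨i, (hi ⟨0, by omega⟩).symm⟩

lemma const_tail {w : Word} {a : Fin 2} (hstep : ∀ i, w i = a → w (i+1) = a)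
    {i0 : ℕ} (h0 : w i0 = a) : ∀ d, w (i0 + d) = a := by
  intro d
  induction d with
  | zero => simpa using h0
  | succ d ih => have := hstep _ ih; rwa [show i0 + d + 1 = i0 + (d+1) by omega] at this

lemma evper_of_no_pair {w : Word} (hst : ∀ n, 1 ≤ n → Comp w n = n + 1)
    {a : Fin 2} (h : ¬ Fac w [a, (if a = 0 then 1 else 0)]) : False := by
  set b : Fin 2 := if a = 0 then 1 else 0 with hb
  have hab : b ≠ a := by rcases fin2_cases a with h' | h' <;> simp [hb, h']
  have hstep : ∀ i, w i = a → w (i+1) = a := by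
    intro i hi
    by_contra hc
    have : w (i+1) = b := by
      rcases fin2_cases (w (i+1)) with h' | h' <;> rcases fin2_cases a with h'' | h'' <;>
        simp_all [hb]
    exact h (fac_pair_iff.2 ⟨i, hi, this⟩)
  obtain ⟨i0, h0⟩ := exists_letter hst a
  have hper : EvPer w := by
    refine ⟨1, by omega, i0, fun i hi => ?_⟩
    have h1 : w i = a := by
      have := const_tail hstep h0 (i - i0)
      rwa [show i0 + (i - i0) = i by omega] at this
    have h2 : w (i + 1) = a := hstep i h1
    rw [h1, h2]
  exact sturmian_not_evper hst hper

lemma missing_pair {w : Word} (hst : ∀ n, 1 ≤ n → Comp w n = n + 1) :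
    ¬ Fac w [0,0] ∨ ¬ Fac w [1,1] := by
  by_contra hc
  push_neg at hc
  obtain ⟨h00, h11⟩ := hc
  have h01 : Fac w [0,1] := by
    by_contra h
    exact evper_of_no_pair hst (a := 0) (by simpa using h)
  have h10 : Fac w [1,0] := by
    by_contra h
    exact evper_of_no_pair hst (a := 1) (by simpa using h)
  have huniv : Factors w 2 = Set.univ := by
    apply Set.eq_of_subset_of_ncard_le (Set.subset_univ _)
    rw [Set.ncard_univ]
    · have h4 : Nat.card (Fin 2 → Fin 2) = 4 := by
        simp [Nat.card_eq_fintype_card]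
      rw [h4]
      have hsub : Set.univ ⊆ Factors w 2 := by
        intro v _
        have hfac : Fac w [v 0, v 1] := by
          rcases fin2_cases (v 0) with h' | h' <;> rcases fin2_cases (v 1) with h'' | h'' <;>
            rw [h', h''] <;> assumption
        obtain ⟨i, hi0, hi1⟩ := fac_pair_iff.1 hfac
        refine ⟨i, fun j => ?_⟩
        fin_cases j
        · simpa using hi0.symm
        · simpa using hi1.symm
      have := Set.ncard_le_ncard hsub (Set.toFinite _)
      rw [Set.ncard_univ, h4] at this
      exact le_trans this (le_refl _)
  have : Comp w 2 = 4 := by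
    rw [show Comp w 2 = (Factors w 2).ncard from rfl, huniv, Set.ncard_univ]
    simp [Nat.card_eq_fintype_card]
  rw [hst 2 (by omega)] at this
  omega

/-- right-special factor, list form -/
def RSL (w : Word) (l : List (Fin 2)) : Prop := Fac w (l ++ [0]) ∧ Fac w (l ++ [1])

lemma snoc_mem_of_fac {w : Word} {l : List (Fin 2)} {n : ℕ} (hl : l.length = n) {a : Fin 2}
    (h : Fac w (l ++ [a])) :
    Fin.snoc (fun j : Fin n => l[j.val]'(by omega)) a ∈ Factors w (n+1) := by
  have hl' : (l ++ [a]).length = n + 1 := by simp [hl]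
  have hmem := (fac_iff_mem' hl').1 h
  have heq : (fun j : Fin (n+1) => (l ++ [a])[j.val]'(by omega)) =
      Fin.snoc (fun j : Fin n => l[j.val]'(by omega)) a := by
    funext j
    refine Fin.lastCases ?_ ?_ j
    · simp [Fin.snoc]
      rw [List.getElem_append_right (by omega)]
      simp [hl]
    · intro k
      simp only [Fin.snoc_castSucc]
      have hk : (k : ℕ) < l.length := by omega
      have hcast : ((k.castSucc : Fin (n+1)) : ℕ) = (k : ℕ) := rfl
      simp only [hcast, List.getElem_append, hk, dif_pos]
  rwa [heq] at hmem

lemma sturmian_unique_RSL {w : Word} (hst : ∀ n, 1 ≤ n → Comp w n = n + 1)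
    {l₁ l₂ : List (Fin 2)} (h₁ : RSL w l₁) (h₂ : RSL w l₂)
    (hlen : l₁.length = l₂.length) : l₁ = l₂ := by
  set n := l₁.length with hn
  have hv₁ : RSf w (fun j : Fin n => l₁[j.val]'(by omega)) :=
    ⟨snoc_mem_of_fac hn.symm h₁.1, snoc_mem_of_fac hn.symm h₁.2⟩
  have hv₂ : RSf w (fun j : Fin n => l₂[j.val]'(by omega)) :=
    ⟨snoc_mem_of_fac hlen.symm h₂.1, snoc_mem_of_fac hlen.symm h₂.2⟩
  have := sturmian_unique_RSf w n hst hv₁ hv₂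
  apply List.ext_getElem hlen
  intro j hj1 hj2
  exact congrFun this ⟨j, by omega⟩

lemma RSL_drop {w : Word} {l : List (Fin 2)} (h : RSL w l) (t : ℕ) : RSL w (l.drop t) := by
  constructor <;> [have h' := h.1; have h' := h.2] <;>
  · rw [← List.take_append_drop t l, List.append_assoc] at h'
    exact fac_append_right h'

lemma RSL_chain {w : Word} (hst : ∀ n, 1 ≤ n → Comp w n = n + 1)
    {l₁ l₂ : List (Fin 2)} (h₁ : RSL w l₁) (h₂ : RSL w l₂)
    (hl : l₁.length ≤ l₂.length) : l₁ <:+ l₂ := by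
  have hd := RSL_drop h₂ (l₂.length - l₁.length)
  have hlen : l₁.length = (l₂.drop (l₂.length - l₁.length)).length := by
    rw [List.length_drop]; omega
  rw [sturmian_unique_RSL hst h₁ hd hlen]
  exact List.drop_suffix _ _

end SB

namespace SB

def ind (a : Fin 2) : ℕ := if a = 1 then 1 else 0

lemma ones_cons' (a : Fin 2) (l : List (Fin 2)) : ones (a :: l) = ind a + ones l :=
  ones_cons a l

lemma ones_concat (l : List (Fin 2)) (b : Fin 2) : ones (l ++ [b]) = ones l + ind b := by
  rw [ones_append, ones_singleton]; rfl

lemma ind_cases (a : Fin 2) : (ind a = 0 ∧ a = 0) ∨ (ind a = 1 ∧ a = 1) := by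
  rcases fin2_cases a with h | h <;> simp [ind, h]

lemma list_diff {α : Type*} : ∀ (m m' : List α), m.length = m'.length → m ≠ m' →
    ∃ p a b s t, m = p ++ a :: s ∧ m' = p ++ b :: t ∧ a ≠ b ∧ s.length = t.length := by
  intro m
  induction m with
  | nil =>
    intro m' hlen hne
    cases m' with
    | nil => exact absurd rfl hne
    | cons c m₀ => simp at hlen
  | cons a m₀ ih =>
    intro m' hlen hne
    cases m' with
    | nil => simp at hlen
    | cons b m₀' =>
      by_cases hab : a = b
      · subst hab
        have hne' : m₀ ≠ m₀' := fun h => hne (by rw [h])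
        have hlen' : m₀.length = m₀'.length := by simpa using hlen
        obtain ⟨p, a', b', s, t, h1, h2, h3, h4⟩ := ih m₀' hlen' hne'
        exact ⟨a :: p, a', b', s, t, by simp [h1], by simp [h2], h3, h4⟩
      · refine ⟨[], a, b, m₀, m₀', by simp, by simp, hab, by simpa using hlen⟩

lemma ind_le (a : Fin 2) : ind a ≤ 1 := by
  rcases ind_cases a with ⟨h,_⟩ | ⟨h,_⟩ <;> omega

lemma eq_one_of_ind {a : Fin 2} (h : ind a = 1) : a = 1 := by
  rcases ind_cases a with ⟨h',_⟩ | ⟨_,h''⟩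
  · omega
  · exact h''

lemma eq_zero_of_ind {a : Fin 2} (h : ind a = 0) : a = 0 := by
  rcases ind_cases a with ⟨_,h''⟩ | ⟨h',_⟩
  · exact h''
  · omega

lemma extract_u {w : Word} {N : ℕ}
    (bal : ∀ l1 l2 : List (Fin 2), Fac w l1 → Fac w l2 → l1.length = l2.length →
           l1.length < N → (ones l1 : ℤ) ≤ ones l2 + 1)
    {x y : List (Fin 2)} (hx : Fac w x) (hy : Fac w y)
    (hxN : x.length = N) (hyN : y.length = N)
    (hun : (ones y : ℤ) + 2 ≤ ones x) :
    ∃ u, x = 1 :: (u ++ [1]) ∧ y = 0 :: (u ++ [0]) := by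
  have hN2 : 2 ≤ N := by
    have h1 := ones_le_length x
    rw [hxN] at h1
    omega
  obtain ⟨a, x1, rfl⟩ : ∃ a x1, x = a :: x1 := by
    cases x with
    | nil => simp at hxN; omega
    | cons a x1 => exact ⟨a, x1, rfl⟩
  obtain ⟨m, b, rfl⟩ : ∃ m b, x1 = m ++ [b] := by
    rcases List.eq_nil_or_concat x1 with h | ⟨m, b, h⟩
    · subst h; simp at hxN; omega
    · exact ⟨m, b, by rw [h, List.concat_eq_append]⟩
  obtain ⟨c, y1, rfl⟩ : ∃ c y1, y = c :: y1 := by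
    cases y with
    | nil => simp at hyN; omega
    | cons c y1 => exact ⟨c, y1, rfl⟩
  obtain ⟨m', d, rfl⟩ : ∃ m' d, y1 = m' ++ [d] := by
    rcases List.eq_nil_or_concat y1 with h | ⟨m', d, h⟩
    · subst h; simp at hyN; omega
    · exact ⟨m', d, by rw [h, List.concat_eq_append]⟩
  have hlm : m.length + 2 = N := by simpa using hxN
  have hlm' : m'.length + 2 = N := by simpa using hyN
  have hxtail : Fac w (m ++ [b]) := fac_append_right (l₁ := [a]) (by simpa using hx)
  have hytail : Fac w (m' ++ [d]) := fac_append_right (l₁ := [c]) (by simpa using hy)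
  have hxhead : Fac w (a :: m) := by
    apply fac_append_left (l₂ := [b])
    simpa using hx
  have hyhead : Fac w (c :: m') := by
    apply fac_append_left (l₂ := [d])
    simpa using hy
  have balt := bal _ _ hxtail hytail (by simp; omega) (by simp; omega)
  have balh := bal _ _ hxhead hyhead (by simp; omega) (by simp; omega)
  have ex : ones (a :: (m ++ [b])) = ind a + ones m + ind b := by
    rw [ones_cons', ones_concat]; omega
  have ey : ones (c :: (m' ++ [d])) = ind c + ones m' + ind d := by
    rw [ones_cons', ones_concat]; omega
  have et : ones (m ++ [b]) = ones m + ind b := ones_concat m b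
  have et' : ones (m' ++ [d]) = ones m' + ind d := ones_concat m' d
  have eh : ones (a :: m) = ind a + ones m := ones_cons' a m
  have eh' : ones (c :: m') = ind c + ones m' := ones_cons' c m'
  have ba := ind_le a
  have bb := ind_le b
  have bc := ind_le c
  have bd := ind_le d
  have key : ind a = 1 ∧ ind b = 1 ∧ ind c = 0 ∧ ind d = 0 ∧ ones m = ones m' := by
    rw [et, et'] at balt
    rw [eh, eh'] at balh
    rw [ex, ey] at hun
    omega
  obtain ⟨ka, kb, kc, kd, hom⟩ := key
  have haa : a = 1 := eq_one_of_ind ka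
  have hbb : b = 1 := eq_one_of_ind kb
  have hcc : c = 0 := eq_zero_of_ind kc
  have hdd : d = 0 := eq_zero_of_ind kd
  subst haa hbb hcc hdd
  have hmm : m = m' := by
    by_contra hne
    obtain ⟨p, a', b', s, t, h1, h2, h3, h4⟩ := list_diff m m' (by omega) hne
    have hos : ones m = ones p + ind a' + ones s := by
      rw [h1, ones_append, ones_cons']; omega
    have hot : ones m' = ones p + ind b' + ones t := by
      rw [h2, ones_append, ones_cons']; omega
    rcases ind_cases a' with ⟨ha2, ha2'⟩ | ⟨ha2, ha2'⟩ <;>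
      rcases ind_cases b' with ⟨hb2, hb2'⟩ | ⟨hb2, hb2'⟩
    · exact h3 (by rw [ha2', hb2'])
    · -- a' = 0, b' = 1 : compare suffixes s ++ [1] and t ++ [0]
      have hfs : Fac w (s ++ [1]) := by
        apply fac_append_right (l₁ := 1 :: p ++ [a'])
        have hre : (1 :: p ++ [a']) ++ (s ++ [1]) = 1 :: (m ++ [1]) := by
          rw [h1]; simp
        rw [hre]; exact hx
      have hft : Fac w (t ++ [0]) := by
        apply fac_append_right (l₁ := 0 :: p ++ [b'])
        have hre : (0 :: p ++ [b']) ++ (t ++ [0]) = 0 :: (m' ++ [0]) := by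
          rw [h2]; simp
        rw [hre]; exact hy
      have hlen1 : (s ++ [1] : List (Fin 2)).length = (t ++ [0] : List (Fin 2)).length := by
        simp [h4]
      have hlt : (s ++ [1] : List (Fin 2)).length < N := by
        have hml : m.length = p.length + 1 + s.length := by rw [h1]; simp; omega
        simp; omega
      have hbal2 := bal _ _ hfs hft hlen1 hlt
      rw [ones_concat, ones_concat] at hbal2
      have e1 : ind (1 : Fin 2) = 1 := rfl
      have e0 : ind (0 : Fin 2) = 0 := rfl
      omega
    · -- a' = 1, b' = 0 : compare prefixes
      have hfp1 : Fac w (1 :: p ++ [a']) := by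
        apply fac_append_left (l₂ := s ++ [1])
        have hre : (1 :: p ++ [a']) ++ (s ++ [1]) = 1 :: (m ++ [1]) := by
          rw [h1]; simp
        rw [hre]; exact hx
      have hfp2 : Fac w (0 :: p ++ [b']) := by
        apply fac_append_left (l₂ := t ++ [0])
        have hre : (0 :: p ++ [b']) ++ (t ++ [0]) = 0 :: (m' ++ [0]) := by
          rw [h2]; simp
        rw [hre]; exact hy
      have hlen1 : (1 :: p ++ [a'] : List (Fin 2)).length = (0 :: p ++ [b'] : List (Fin 2)).length := by
        simp
      have hlt : (1 :: p ++ [a'] : List (Fin 2)).length < N := by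
        have hml : m.length = p.length + 1 + s.length := by rw [h1]; simp; omega
        simp; omega
      have hbal2 := bal _ _ hfp1 hfp2 hlen1 hlt
      have i1 : ind (1 : Fin 2) = 1 := rfl
      have i0 : ind (0 : Fin 2) = 0 := rfl
      have hr1 : ones (1 :: p ++ [a']) = 1 + ones p + ind a' := by
        rw [List.cons_append, ones_cons', ones_concat, i1]; omega
      have hr2 : ones (0 :: p ++ [b']) = ones p + ind b' := by
        rw [List.cons_append, ones_cons', ones_concat, i0]; omega
      omega
    · exact h3 (by rw [ha2', hb2'])
  exact ⟨m, rfl, by rw [hmm]⟩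

end SB

namespace SB

/-! ### Parsing a word with no `11` and starting with `0` into blocks `0` / `01` -/

def phi (w : Word) : ℕ → ℕ
  | 0 => 0
  | m+1 => phi w m + 1 + (w (phi w m + 1)).val

/-- derived (decoded) word -/
def der (w : Word) : Word := fun m => w (phi w m + 1)

lemma phi_succ (w : Word) (m : ℕ) :
    phi w (m+1) = phi w m + 1 + (der w m).val := rfl

section parse
variable {w : Word} (hw0 : w 0 = 0) (no11 : ∀ i, ¬(w i = 1 ∧ w (i+1) = 1))

include hw0 no11 in
lemma phi_letter : ∀ m, w (phi w m) = 0 := by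
  intro m
  induction m with
  | zero => simpa [phi] using hw0
  | succ m ih =>
    rw [phi_succ]
    rcases fin2_cases (der w m) with h | h
    · rw [h]
      simpa [der] using h
    · rw [h]
      have h1 : w (phi w m + 1) = 1 := h
      rcases fin2_cases (w (phi w m + 1 + 1)) with h2 | h2
      · simpa using h2
      · exact absurd ⟨h1, by simpa using h2⟩ (no11 (phi w m + 1))

lemma phi_le_succ (w : Word) (m : ℕ) : phi w m + 1 ≤ phi w (m+1) := by
  rw [phi_succ]; omega

lemma phi_mono (w : Word) {m m' : ℕ} (h : m ≤ m') : phi w m ≤ phi w m' := by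
  induction m' with
  | zero => simpa [Nat.le_zero.1 h]
  | succ k ih =>
    rcases Nat.lt_or_ge m (k+1) with h' | h'
    · have := ih (by omega)
      have := phi_le_succ w k
      omega
    · have : m = k + 1 := by omega
      subst this; rfl

lemma phi_add_le (w : Word) (m s : ℕ) : phi w m + s ≤ phi w (m + s) := by
  induction s with
  | zero => simp
  | succ s ih =>
    have := phi_le_succ w (m + s)
    rw [show m + (s+1) = (m+s)+1 by omega]
    omega

lemma phi_gap_le (w : Word) (m : ℕ) : phi w (m+1) ≤ phi w m + 2 := by
  rw [phi_succ]
  have : (der w m).val ≤ 1 := by omega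
  omega

include hw0 no11 in
lemma phi_cover : ∀ j, (∃ m, phi w m = j) ∨ (∃ m, phi w m + 1 = j ∧ w j = 1) := by
  intro j
  induction j with
  | zero => exact Or.inl ⟨0, rfl⟩
  | succ j ih =>
    rcases ih with ⟨m, hm⟩ | ⟨m, hm, h1⟩
    · rcases fin2_cases (w (j+1)) with h | h
      · left
        refine ⟨m+1, ?_⟩
        rw [phi_succ]
        have : der w m = w (j + 1) := by rw [der, hm]
        rw [this, h]
        simpa using hm
      · right
        exact ⟨m, by omega, h⟩
    · left
      refine ⟨m+1, ?_⟩
      rw [phi_succ]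
      have : der w m = w j := by rw [der, hm]
      rw [this, h1]
      simp; omega

include hw0 no11 in
lemma zero_aligned {j : ℕ} (hj : w j = 0) : ∃ m, phi w m = j := by
  rcases phi_cover hw0 no11 j with h | ⟨m, hm, h1⟩
  · exact h
  · rw [hj] at h1; exact absurd h1 (by decide)

include hw0 no11 in
lemma one_aligned {j : ℕ} (hj : w j = 1) : ∃ m, phi w m = j + 1 := by
  rcases phi_cover hw0 no11 j with ⟨m, hm⟩ | ⟨m, hm, h1⟩
  · rw [← hm] at hj
    rw [phi_letter hw0 no11 m] at hj
    exact absurd hj (by decide)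
  · refine ⟨m+1, ?_⟩
    rw [phi_succ]
    have : der w m = w j := by rw [der, hm]
    rw [this, hj]
    simp; omega

end parse

/-! ### The substitution `0 ↦ 0`, `1 ↦ 01` -/

def bl (a : Fin 2) : List (Fin 2) := if a = 1 then [0, 1] else [0]

def psi (l : List (Fin 2)) : List (Fin 2) := l.flatMap bl

@[simp] lemma psi_nil : psi [] = [] := rfl

lemma psi_append (l₁ l₂ : List (Fin 2)) : psi (l₁ ++ l₂) = psi l₁ ++ psi l₂ := by
  simp [psi]

lemma psi_singleton (a : Fin 2) : psi [a] = bl a := by simp [psi]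

lemma bl_length (a : Fin 2) : (bl a).length = 1 + ind a := by
  rcases fin2_cases a with h | h <;> simp [bl, ind, h]

lemma bl_ones (a : Fin 2) : ones (bl a) = ind a := by
  rcases fin2_cases a with h | h <;> simp [bl, ind, h, ones_cons, ones_singleton]

lemma psi_length (l : List (Fin 2)) : (psi l).length = l.length + ones l := by
  induction l with
  | nil => simp
  | cons a l ih =>
    rw [show a :: l = [a] ++ l from rfl, psi_append, List.length_append, psi_singleton,
        ones_append, bl_length, ones_singleton]
    simp [ih, ind]
    rcases fin2_cases a with h | h <;> simp [h] <;> omega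

lemma psi_ones (l : List (Fin 2)) : ones (psi l) = ones l := by
  induction l with
  | nil => simp
  | cons a l ih =>
    rw [show a :: l = [a] ++ l from rfl, psi_append, ones_append, ones_append,
        psi_singleton, bl_ones, ones_singleton]
    simp [ind, ih]

lemma bl_getLast? (u : List (Fin 2)) (c : Fin 2) : (u ++ bl c).getLast? = some c := by
  rcases fin2_cases c with h | h <;> rw [h] <;> simp [bl]

lemma psi_suffix_eq : ∀ (x y : List (Fin 2)), psi x <:+ psi y → x.length = y.length → x = y := by
  intro x
  induction x using List.reverseRecOn with
  | nil =>
    intro y _ hlen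
    exact (List.length_eq_zero_iff.1 hlen.symm).symm
  | append_singleton x₀ a ih =>
    intro y hsuf hlen
    rcases List.eq_nil_or_concat y with rfl | ⟨y₀, b, rfl⟩
    · simp at hlen
    rw [List.concat_eq_append] at *
    obtain ⟨t, ht⟩ := hsuf
    rw [psi_append, psi_append, psi_singleton, psi_singleton] at ht
    have hab : a = b := by
      have h1 : (psi y₀ ++ bl b).getLast? = some b := bl_getLast? _ _
      have h2 : (t ++ (psi x₀ ++ bl a)).getLast? = some a := by
        rw [← List.append_assoc]
        exact bl_getLast? _ _
      rw [← ht] at h1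
      rw [h2] at h1
      exact Option.some_injective _ h1
    subst hab
    have hL := congrArg List.length ht
    simp only [List.length_append] at hL
    have hbla : (bl a).length = (bl a).length := rfl
    have ht' : (t ++ psi x₀) ++ bl a = psi y₀ ++ bl a := by
      rw [List.append_assoc]; exact ht
    have hcan' := List.append_inj_left ht' (by simp only [List.length_append]; omega)
    have hcan : psi y₀ = t ++ psi x₀ := hcan'.symm
    have hx0 : x₀ = y₀ := by
      apply ih
      · exact ⟨t, hcan.symm⟩
      · have := hlen
        simp at this
        omega
    rw [hx0]

end SB

namespace SB

lemma decode {w : Word} (hw0 : w 0 = 0) (no11 : ∀ i, ¬(w i = 1 ∧ w (i+1) = 1)) :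
    ∀ (s m : ℕ), occ w (phi w m) (phi w (m+s) - phi w m) = psi (occ (der w) m s) := by
  intro s
  induction s with
  | zero => intro m; simp
  | succ s ih =>
    intro m
    have hms : phi w m ≤ phi w (m+s) := phi_mono w (by omega)
    have hms1 : phi w (m+s) + 1 ≤ phi w (m+s+1) := phi_le_succ w (m+s)
    have hDg : phi w (m+(s+1)) - phi w m
        = (phi w (m+s) - phi w m) + (phi w (m+s+1) - phi w (m+s)) := by
      rw [show m+(s+1) = (m+s)+1 by omega]; omega
    rw [hDg, occ_add, occ_succ (der w) m s, psi_append, psi_singleton, ih m]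
    congr 1
    rw [show phi w m + (phi w (m+s) - phi w m) = phi w (m+s) by omega]
    rcases fin2_cases (der w (m+s)) with h | h
    · have hv : (der w (m+s)).val = 0 := by rw [h]; rfl
      have hg : phi w (m+s+1) - phi w (m+s) = 1 := by
        rw [phi_succ, hv]; omega
      rw [h, hg, occ_one, phi_letter hw0 no11]
      rfl
    · have hv : (der w (m+s)).val = 1 := by rw [h]; rfl
      have hg : phi w (m+s+1) - phi w (m+s) = 2 := by
        rw [phi_succ, hv]; omega
      rw [h, hg, occ_two, phi_letter hw0 no11]
      have h1 : w (phi w (m+s) + 1) = 1 := h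
      rw [h1]
      rfl

lemma decode_seg {w : Word} (hw0 : w 0 = 0) (no11 : ∀ i, ¬(w i = 1 ∧ w (i+1) = 1))
    {q L m m' : ℕ} (hm : phi w m = q) (hm' : phi w m' = q + L) (hL : 1 ≤ L) :
    ∃ x : List (Fin 2), Fac (der w) x ∧ psi x = occ w q L ∧
      x.length + ones x = L ∧ ones x = ones (occ w q L) := by
  have hmm' : m ≤ m' := by
    by_contra hc
    push_neg at hc
    have := phi_mono w (show m' ≤ m by omega)
    omega
  set s := m' - m with hs
  have hms : m + s = m' := by omega
  have hd := decode hw0 no11 s m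
  rw [hms, hm, hm'] at hd
  rw [show q + L - q = L by omega] at hd
  refine ⟨occ (der w) m s, fac_occ _ _ _, hd.symm, ?_, ?_⟩
  · have hpl := psi_length (occ (der w) m s)
    rw [← hd] at hpl
    simp only [occ_length] at hpl ⊢
    omega
  · have hpo := psi_ones (occ (der w) m s)
    rw [← hd] at hpo
    omega

lemma der_RSL {w : Word} (hw0 : w 0 = 0) (no11 : ∀ i, ¬(w i = 1 ∧ w (i+1) = 1))
    {x : List (Fin 2)} (h : RSL (der w) x) : RSL w (psi x ++ [0]) := by
  have hbl0 : bl 0 = [0] := rfl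
  have hbl1 : bl 1 = [0, 1] := rfl
  constructor
  · obtain ⟨m, hm⟩ := h.1
    have hm' : occ (der w) m (x.length + 1) = x ++ [0] := by
      simpa using hm
    have hd := decode hw0 no11 (x.length + 1) m
    rw [hm', psi_append, psi_singleton, hbl0] at hd
    have hmono : phi w m ≤ phi w (m + (x.length+1)) := phi_mono w (by omega)
    have hlen := congrArg List.length hd
    simp only [occ_length, List.length_append, List.length_singleton] at hlen
    have hext := occ_succ w (phi w m) (phi w (m + (x.length+1)) - phi w m)
    rw [hd] at hext
    rw [show phi w m + (phi w (m + (x.length+1)) - phi w m) = phi w (m + (x.length+1)) by omega,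
        phi_letter hw0 no11] at hext
    refine ⟨phi w m, ?_⟩
    have hlen2 : ((psi x ++ [0]) ++ [0]).length = (phi w (m + (x.length+1)) - phi w m) + 1 := by
      simp only [List.length_append, List.length_singleton]
      omega
    rw [hlen2, hext]
  · obtain ⟨m, hm⟩ := h.2
    have hm' : occ (der w) m (x.length + 1) = x ++ [1] := by
      simpa using hm
    have hd := decode hw0 no11 (x.length + 1) m
    rw [hm', psi_append, psi_singleton, hbl1] at hd
    have hlen := congrArg List.length hd
    simp at hlen
    refine ⟨phi w m, ?_⟩
    have hlen2 : ((psi x ++ [0]) ++ [1]).length = phi w (m + (x.length+1)) - phi w m := by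
      simp only [List.length_append, List.length_singleton]
      omega
    rw [hlen2, hd]
    simp

lemma der_unique_RSL_aux {w : Word} (hst : ∀ n, 1 ≤ n → Comp w n = n + 1)
    (hw0 : w 0 = 0) (no11 : ∀ i, ¬(w i = 1 ∧ w (i+1) = 1))
    {x y : List (Fin 2)} (hx : RSL (der w) x) (hy : RSL (der w) y)
    (hlen : x.length = y.length) (hle : (psi x).length ≤ (psi y).length) : x = y := by
  have W1 := der_RSL hw0 no11 hx
  have W2 := der_RSL hw0 no11 hy
  have hchain := RSL_chain hst W1 W2 (by simp; omega)
  obtain ⟨t, ht⟩ := hchain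
  have ht' : (t ++ psi x) ++ [0] = psi y ++ [0] := by
    rw [List.append_assoc]; exact ht
  have hL := congrArg List.length ht'
  simp only [List.length_append] at hL
  have hc := List.append_inj_left ht' (by simp only [List.length_append]; omega)
  exact psi_suffix_eq x y ⟨t, hc⟩ hlen

lemma der_unique_RSL {w : Word} (hst : ∀ n, 1 ≤ n → Comp w n = n + 1)
    (hw0 : w 0 = 0) (no11 : ∀ i, ¬(w i = 1 ∧ w (i+1) = 1))
    {x y : List (Fin 2)} (hx : RSL (der w) x) (hy : RSL (der w) y)
    (hlen : x.length = y.length) : x = y := by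
  rcases le_total (psi x).length (psi y).length with h | h
  · exact der_unique_RSL_aux hst hw0 no11 hx hy hlen h
  · exact (der_unique_RSL_aux hst hw0 no11 hy hx hlen.symm h).symm

lemma evper_of_evper_der {w : Word} (hw0 : w 0 = 0)
    (no11 : ∀ i, ¬(w i = 1 ∧ w (i+1) = 1)) (h : EvPer (der w)) : EvPer w := by
  obtain ⟨p, hp, Q, hper⟩ := h
  set c := phi w (Q+p) - phi w Q with hc
  have hQp : phi w Q + p ≤ phi w (Q + p) := phi_add_le w Q p
  have hshift : ∀ m, Q ≤ m → phi w (m + p) = phi w m + c := by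
    intro m hm
    induction m, hm using Nat.le_induction with
    | base =>
      have := phi_mono w (show Q ≤ Q + p by omega)
      omega
    | succ m hm ih =>
      have e1 : phi w (m+1+p) = phi w (m+p) + 1 + (der w (m+p)).val := by
        rw [show m+1+p = (m+p)+1 by omega, phi_succ]
      have e2 : phi w (m+1) = phi w m + 1 + (der w m).val := phi_succ w m
      have e3 : der w (m+p) = der w m := hper m hm
      rw [e1, e3, ih, e2]
      omega
  refine ⟨c, by omega, phi w Q + 1, fun j hj => ?_⟩
  have hj' : phi w Q ≤ j := by omega
  rcases phi_cover hw0 no11 j with ⟨m, hm⟩ | ⟨m, hm, h1⟩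
  · have hmQ : Q ≤ m := by
      by_contra hcon
      push_neg at hcon
      have h2 : phi w (m+1) ≤ phi w Q := phi_mono w (by omega)
      have h3 := phi_le_succ w m
      omega
    have e1 : w (j + c) = 0 := by
      rw [show j + c = phi w (m + p) by rw [hshift m hmQ]; omega]
      exact phi_letter hw0 no11 (m+p)
    rw [e1, ← hm, phi_letter hw0 no11 m]
  · have hmQ : Q ≤ m := by
      by_contra hcon
      push_neg at hcon
      have h2 : phi w (m+1) ≤ phi w Q := phi_mono w (by omega)
      have h3 := phi_le_succ w m
      have h4 : phi w Q = j := by omega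
      have h5 := phi_letter hw0 no11 Q
      rw [h4, h1] at h5
      exact absurd h5 (by decide)
    have e1 : w (j + c) = w (phi w (m+p) + 1) := by
      rw [hshift m hmQ]
      congr 1
      omega
    rw [e1]
    have e2 : der w (m+p) = der w m := hper m hmQ
    have e3 : w (phi w (m + p) + 1) = der w (m+p) := rfl
    have e4 : der w m = w j := by rw [der, hm]
    rw [e3, e2, e4]

lemma mem_iff_fac_ofFn {s : Word} {n : ℕ} {v : Fin n → Fin 2} :
    v ∈ Factors s n ↔ Fac s (List.ofFn v) := by
  have hl : (List.ofFn v).length = n := List.length_ofFn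
  rw [fac_iff_mem' hl]
  have he : (fun j : Fin n => (List.ofFn v)[j.val]'(by omega)) = v := by
    funext j; simp
  rw [he]

lemma ofFn_snoc {n : ℕ} (v : Fin n → Fin 2) (a : Fin 2) :
    List.ofFn (Fin.snoc v a : Fin (n+1) → Fin 2) = List.ofFn v ++ [a] := by
  rw [List.ofFn_succ']
  simp [List.concat_eq_append]

lemma der_unique_RSf {w : Word} (hst : ∀ n, 1 ≤ n → Comp w n = n + 1)
    (hw0 : w 0 = 0) (no11 : ∀ i, ¬(w i = 1 ∧ w (i+1) = 1)) (n : ℕ)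
    {v₁ v₂ : Fin n → Fin 2} (h₁ : RSf (der w) v₁) (h₂ : RSf (der w) v₂) : v₁ = v₂ := by
  have r₁ : RSL (der w) (List.ofFn v₁) := by
    constructor
    · have := mem_iff_fac_ofFn.1 h₁.1; rwa [ofFn_snoc] at this
    · have := mem_iff_fac_ofFn.1 h₁.2; rwa [ofFn_snoc] at this
  have r₂ : RSL (der w) (List.ofFn v₂) := by
    constructor
    · have := mem_iff_fac_ofFn.1 h₂.1; rwa [ofFn_snoc] at this
    · have := mem_iff_fac_ofFn.1 h₂.2; rwa [ofFn_snoc] at this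
  have heq := der_unique_RSL hst hw0 no11 r₁ r₂ (by simp)
  funext j
  have := congrArg (fun l : List (Fin 2) => l[(j : ℕ)]?) heq
  simpa using this

lemma comp_one_le (s : Word) : Comp s 1 ≤ 2 := by
  have h1 : Factors s 1 ⊆ Set.univ := Set.subset_univ _
  calc Comp s 1 ≤ (Set.univ : Set (Fin 1 → Fin 2)).ncard :=
        Set.ncard_le_ncard h1 (Set.toFinite _)
    _ = 2 := by rw [Set.ncard_univ]; simp [Nat.card_eq_fintype_card]

lemma der_hst {w : Word} (hst : ∀ n, 1 ≤ n → Comp w n = n + 1)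
    (hw0 : w 0 = 0) (no11 : ∀ i, ¬(w i = 1 ∧ w (i+1) = 1)) :
    ∀ n, 1 ≤ n → Comp (der w) n = n + 1 := by
  have hnotev : ¬ EvPer (der w) := fun h =>
    sturmian_not_evper hst (evper_of_evper_der hw0 no11 h)
  have hub : ∀ n, 1 ≤ n → Comp (der w) n ≤ n + 1 := by
    intro n hn
    induction n with
    | zero => omega
    | succ n ih =>
      rcases Nat.eq_zero_or_pos n with rfl | hn'
      · simpa using comp_one_le (der w)
      · have := comp_succ_le (der w) n (fun v₁ v₂ hv₁ hv₂ =>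
          der_unique_RSf hst hw0 no11 n hv₁ hv₂)
        have := ih hn'
        omega
  intro n hn
  have := not_evper_comp hnotev n hn
  have := hub n hn
  omega

end SB

namespace SB

/-! ### letter swap -/

def sw (a : Fin 2) : Fin 2 := if a = 0 then 1 else 0

def sww (w : Word) : Word := fun i => sw (w i)

lemma sw_sw (a : Fin 2) : sw (sw a) = a := by
  rcases fin2_cases a with h | h <;> simp [sw, h]

lemma sw_inj : Function.Injective sw := by
  intro a b h
  rw [← sw_sw a, h, sw_sw]

lemma map_sw_sw (l : List (Fin 2)) : (l.map sw).map sw = l := by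
  rw [List.map_map]
  have : sw ∘ sw = id := funext sw_sw
  rw [this, List.map_id]

lemma sw_comp : sw ∘ sw = id := funext sw_sw

lemma occ_sww (w : Word) (i n : ℕ) : occ (sww w) i n = (occ w i n).map sw := by
  simp [occ, sww, List.map_map]

lemma fac_sww_iff {w : Word} {l : List (Fin 2)} : Fac (sww w) l ↔ Fac w (l.map sw) := by
  constructor
  · rintro ⟨i, hi⟩
    refine ⟨i, ?_⟩
    rw [List.length_map, ← map_sw_sw (occ w i l.length)]
    rw [← occ_sww, hi]
  · rintro ⟨i, hi⟩
    refine ⟨i, ?_⟩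
    rw [List.length_map] at hi
    rw [occ_sww, hi, map_sw_sw]

lemma hst_sww {w : Word} (hst : ∀ n, 1 ≤ n → Comp w n = n + 1) :
    ∀ n, 1 ≤ n → Comp (sww w) n = n + 1 := by
  intro n hn
  have himg : Factors (sww w) n = (fun v => sw ∘ v) '' Factors w n := by
    ext v
    constructor
    · rintro ⟨i, hi⟩
      refine ⟨fun j => sw (v j), ⟨i, fun j => ?_⟩, ?_⟩
      · show sw (v j) = w (i + j)
        rw [hi j]
        exact sw_sw _
      · funext j
        show sw (sw (v j)) = v j
        exact sw_sw _
    · rintro ⟨v', ⟨i, hi⟩, rfl⟩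
      refine ⟨i, fun j => ?_⟩
      show sw (v' j) = sww w (i + j)
      rw [hi j]
      rfl
  have hinj : Function.Injective (fun v : Fin n → Fin 2 => sw ∘ v) := by
    intro v₁ v₂ h
    funext j
    exact sw_inj (congrFun h j)
  have hcard := Set.ncard_image_of_injective (Factors w n) hinj
  show (Factors (sww w) n).ncard = n + 1
  rw [himg, hcard]
  exact hst n hn

lemma ones_map_sw (l : List (Fin 2)) : ones (l.map sw) + ones l = l.length := by
  induction l with
  | nil => simp
  | cons a l ih =>
    rw [List.map_cons, ones_cons', ones_cons', List.length_cons]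
    have : ind (sw a) + ind a = 1 := by
      rcases fin2_cases a with h | h <;> simp [sw, ind, h]
    omega

/-! ### the core descent argument -/

lemma core (N : ℕ)
    (IH : ∀ M, M < N → ∀ s : Word, (∀ n, 1 ≤ n → Comp s n = n + 1) →
      ∀ x y : List (Fin 2), Fac s x → Fac s y → x.length = M → y.length = M →
      (ones x : ℤ) ≤ ones y + 1)
    (w : Word) (hst : ∀ n, 1 ≤ n → Comp w n = n + 1) (u : List (Fin 2))
    (h1 : Fac w (1 :: (u ++ [1]))) (h0 : Fac w (0 :: (u ++ [0])))
    (hN : u.length + 2 = N) (no11 : ¬ Fac w [1,1]) : False := by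
  -- normalize to a word starting with 0
  have no11' : ∀ i, ¬(w i = 1 ∧ w (i+1) = 1) := by
    intro i hi
    exact no11 (fac_pair_iff.2 ⟨i, hi.1, hi.2⟩)
  obtain ⟨w₁, hst₁, hw₁0, no11₁, hfac1, hfac0⟩ :
      ∃ w₁ : Word, (∀ n, 1 ≤ n → Comp w₁ n = n + 1) ∧ w₁ 0 = 0 ∧
        (∀ i, ¬(w₁ i = 1 ∧ w₁ (i+1) = 1)) ∧
        Fac w₁ (1 :: (u ++ [1])) ∧ Fac w₁ (0 :: (u ++ [0])) := by
    rcases fin2_cases (w 0) with hz | hz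
    · exact ⟨w, hst, hz, no11', h1, h0⟩
    · refine ⟨shf w, hst_shf hst, ?_, ?_, (fac_shf_iff hst).2 h1, (fac_shf_iff hst).2 h0⟩
      · rcases fin2_cases (w 1) with h' | h'
        · exact h'
        · exact absurd ⟨hz, h'⟩ (no11' 0)
      · intro i hi
        exact no11' (i+1) hi
  clear no11 no11' h1 h0 hst
  set k := u.length with hk
  -- occurrence of 0u0
  obtain ⟨q₂, hq₂⟩ := hfac0
  rw [show (0 :: (u ++ [0])).length = 1 + (k + 1) by simp; omega] at hq₂
  rw [occ_add, occ_add] at hq₂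
  rw [show (0:Fin 2) :: (u ++ [0]) = [0] ++ (u ++ [0]) from rfl] at hq₂
  have e1 := List.append_inj hq₂ (by simp)
  have e2 := List.append_inj e1.2 (by simp [hk])
  have hw₁q₂ : w₁ q₂ = 0 := by
    have := e1.1
    rw [occ_one] at this
    simpa using this
  have hu₂ : occ w₁ (q₂ + 1) k = u := e2.1
  have hlast₂ : w₁ (q₂ + 1 + k) = 0 := by
    have := e2.2
    rw [occ_one] at this
    simpa using this
  -- occurrence of 1u1 at a positive position
  obtain ⟨q₁, hq₁pos, hq₁⟩ := fac_exists_pos_occ hst₁ hfac1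
  rw [show (1 :: (u ++ [1])).length = 1 + (k + 1) by simp; omega] at hq₁
  rw [occ_add, occ_add] at hq₁
  rw [show (1:Fin 2) :: (u ++ [1]) = [1] ++ (u ++ [1]) from rfl] at hq₁
  have f1 := List.append_inj hq₁ (by simp)
  have f2 := List.append_inj f1.2 (by simp [hk])
  have hw₁q₁ : w₁ q₁ = 1 := by
    have := f1.1
    rw [occ_one] at this
    simpa using this
  have hu₁ : occ w₁ (q₁ + 1) k = u := f2.1
  have hlast₁ : w₁ (q₁ + 1 + k) = 1 := by
    have := f2.2
    rw [occ_one] at this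
    simpa using this
  -- the letter before the occurrence of 1u1 is 0
  set q := q₁ - 1 with hq
  have hq1q : q + 1 = q₁ := by omega
  have hwq : w₁ q = 0 := by
    rcases fin2_cases (w₁ q) with h' | h'
    · exact h'
    · exact absurd ⟨h', by rwa [hq1q]⟩ (no11₁ q)
  -- alignments
  obtain ⟨m₂, hm₂⟩ := zero_aligned hw₁0 no11₁ hw₁q₂
  obtain ⟨m₂', hm₂'⟩ := zero_aligned hw₁0 no11₁ hlast₂
  obtain ⟨m₁, hm₁⟩ := zero_aligned hw₁0 no11₁ hwq
  obtain ⟨m₁', hm₁'⟩ := one_aligned hw₁0 no11₁ hlast₁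
  -- decode the two aligned segments
  obtain ⟨x0, hx0fac, hx0psi, hx0len, hx0ones⟩ :=
    decode_seg hw₁0 no11₁ hm₂ (by rw [hm₂']; omega : phi w₁ m₂' = q₂ + (k+1)) (by omega)
  obtain ⟨x1, hx1fac, hx1psi, hx1len, hx1ones⟩ :=
    decode_seg hw₁0 no11₁ hm₁ (by rw [hm₁']; omega : phi w₁ m₁' = q + (k+3)) (by omega)
  -- heights of the decoded segments
  have hocc0 : occ w₁ q₂ (k+1) = [0] ++ u := by
    rw [show k + 1 = 1 + k by omega, occ_add, e1.1, hu₂]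
  have hocc1 : occ w₁ q (k+3) = [0] ++ ([1] ++ (u ++ [1])) := by
    rw [show k + 3 = 1 + (1 + (k + 1)) by omega, occ_add]
    congr 1
    · rw [occ_one, hwq]
    · rw [hq1q, occ_add, occ_add, f1.1, hu₁, f2.2]
  have ho0 : ones x0 = ones u := by
    rw [hx0ones, hocc0, ones_append]
    simp [ones_singleton]
  have ho1 : ones x1 = ones u + 2 := by
    have e0 : ones [(0:Fin 2)] = 0 := by decide
    have e1 : ones [(1:Fin 2)] = 1 := by decide
    rw [hx1ones, hocc1, ones_append, ones_append, ones_append, e0, e1]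
    omega
  -- same length, difference 2 : contradiction with IH applied to der w₁
  have hulen : ones u ≤ k := by
    have := ones_le_length u
    omega
  have hlen01 : x1.length = x0.length := by omega
  have hM : x0.length < N := by omega
  have hder := der_hst hst₁ hw₁0 no11₁
  have := IH x0.length hM (der w₁) hder x1 x0 hx1fac hx0fac hlen01 rfl
  rw [ho0, ho1] at this
  omega

/-- the balance theorem, list form, one-sided -/
lemma main_balance : ∀ N : ℕ, ∀ w : Word, (∀ n, 1 ≤ n → Comp w n = n + 1) →
    ∀ x y : List (Fin 2), Fac w x → Fac w y → x.length = N → y.length = N →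
    (ones x : ℤ) ≤ ones y + 1 := by
  intro N
  induction N using Nat.strong_induction_on with
  | _ N IH =>
    intro w hst x y hx hy hxN hyN
    by_contra hcon
    push_neg at hcon
    have hun : (ones y : ℤ) + 2 ≤ ones x := by omega
    have bal : ∀ l1 l2 : List (Fin 2), Fac w l1 → Fac w l2 → l1.length = l2.length →
        l1.length < N → (ones l1 : ℤ) ≤ ones l2 + 1 := by
      intro l1 l2 f1 f2 hl hlt
      exact IH l1.length hlt w hst l1 l2 f1 f2 rfl hl.symm
    obtain ⟨u, hxu, hyu⟩ := extract_u bal hx hy hxN hyN hun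
    have hx1 : Fac w (1 :: (u ++ [1])) := hxu ▸ hx
    have hy0 : Fac w (0 :: (u ++ [0])) := hyu ▸ hy
    have hN : u.length + 2 = N := by
      rw [hxu] at hxN
      simpa using hxN
    rcases missing_pair hst with h00 | h11
    · -- 00 missing : swap letters
      have hstS := hst_sww hst
      have hno11S : ¬ Fac (sww w) [1,1] := by
        intro hf
        have hmap := fac_sww_iff.1 hf
        have : ([1,1] : List (Fin 2)).map sw = [0,0] := rfl
        rw [this] at hmap
        exact h00 hmap
      have hf1 : Fac (sww w) (1 :: (u.map sw ++ [1])) := by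
        rw [fac_sww_iff]
        have : (1 :: (u.map sw ++ [1]) : List (Fin 2)).map sw = 0 :: (u ++ [0]) := by
          simp [sw_comp, sw]
        rw [this]
        exact hy0
      have hf0 : Fac (sww w) (0 :: (u.map sw ++ [0])) := by
        rw [fac_sww_iff]
        have : (0 :: (u.map sw ++ [0]) : List (Fin 2)).map sw = 1 :: (u ++ [1]) := by
          simp [sw_comp, sw]
        rw [this]
        exact hx1
      exact core N IH (sww w) hstS (u.map sw) hf1 hf0 (by simp [hN]) hno11S
    · exact core N IH w hst u hx1 hy0 hN h11

end SB

namespace SB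

lemma hcount_zero (v : Fin 0 → Fin 2) : hcount v = 0 := by
  simp [hcount]

lemma hcount_snoc {n : ℕ} (v : Fin n → Fin 2) (a : Fin 2) :
    hcount (Fin.snoc v a : Fin (n+1) → Fin 2) = hcount v + ind a := by
  simp only [hcount, Finset.card_filter]
  rw [Fin.sum_univ_castSucc]
  simp only [Fin.snoc_castSucc, Fin.snoc_last]
  rfl

lemma ones_occ_eq_hcount (w : Word) : ∀ n i, ones (occ w i n) = hcount (wnd w i n) := by
  intro n
  induction n with
  | zero => intro i; simp [hcount_zero]
  | succ n ih =>
    intro i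
    rw [occ_succ, ones_concat, wnd_succ, hcount_snoc, ih]

end SB


/-- a Sturmian word is balanced: any two factors of the same length
have heights differing by at most `1`. -/
theorem sturmian_balanced (w : ℕ → Fin 2)
    (hst : ∀ n : ℕ, 1 ≤ n → Comp w n = n + 1) (n : ℕ)
    (x y : Fin n → Fin 2) (hx : x ∈ Factors w n) (hy : y ∈ Factors w n) :
    |(hcount x : ℤ) - (hcount y : ℤ)| ≤ 1 := by
  obtain ⟨i, rfl⟩ := SB.mem_factors_iff.1 hx
  obtain ⟨j, rfl⟩ := SB.mem_factors_iff.1 hy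
  have h1 := SB.main_balance n w hst (SB.occ w i n) (SB.occ w j n)
    (SB.fac_occ w i n) (SB.fac_occ w j n) (SB.occ_length w i n) (SB.occ_length w j n)
  have h2 := SB.main_balance n w hst (SB.occ w j n) (SB.occ w i n)
    (SB.fac_occ w j n) (SB.fac_occ w i n) (SB.occ_length w j n) (SB.occ_length w i n)
  rw [SB.ones_occ_eq_hcount, SB.ones_occ_eq_hcount] at h1 h2
  rw [abs_le]
  omega
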